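/- Let A and D be positive integers, i a nonnegative integer, and k an integer such that the residual Δ = k·A − i·D satisfies 0 < Δ < A. Then k ≥ 1, and: if |Δ − A| < |Δ| then k − 1 is a skew-compensated clock of i (i.e., |(k−1)·A − i·D| ≤ |m·A − i·D| for every nonnegative integer m), while if |Δ − A| ≥ |Δ| then k is a skew-compensated clock of i (i.e., |k·A − i·D| ≤ |m·A − i·D| for every nonnegative integer m). -/
import Mathlib


/-- If the residual `Δ = k·A - i·D` satisfies `0 < Δ < A`, then
`k ≥ 1`; if `|Δ - A| < |Δ|` then `k - 1` is a skew-compensated clock of `i`,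
and if `|Δ - A| ≥ |Δ|` then `k` is a skew-compensated clock of `i`. -/
theorem scc_case_pos_residual (A D i k : ℤ) (hA : 0 < A) (hD : 0 < D)
    (hi : 0 ≤ i) (hk1 : 0 < k * A - i * D) (hk2 : k * A - i * D < A) :
    1 ≤ k ∧
    (|(k * A - i * D) - A| < |k * A - i * D| →
      ∀ m : ℤ, 0 ≤ m → |(k - 1) * A - i * D| ≤ |m * A - i * D|) ∧
    (|k * A - i * D| ≤ |(k * A - i * D) - A| →
      ∀ m : ℤ, 0 ≤ m → |k * A - i * D| ≤ |m * A - i * D|) := by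
  have hiD : 0 ≤ i * D := mul_nonneg hi hD.le
  have hk : 1 ≤ k := by nlinarith
  have habs1 : |(k * A - i * D) - A| = A - (k * A - i * D) := by
    rw [abs_of_neg (by linarith : (k * A - i * D) - A < 0)]; ring
  have habs2 : |k * A - i * D| = k * A - i * D := abs_of_pos hk1
  refine ⟨hk, ?_, ?_⟩
  · intro h m hm
    rw [habs1, habs2] at h
    have : (k - 1) * A - i * D = (k * A - i * D) - A := by ring
    rw [this, habs1]
    rcases le_or_gt k m with hmk | hmk
    · refine le_trans ?_ (le_abs_self _)
      nlinarith [mul_le_mul_of_nonneg_right hmk hA.le]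
    · have hm1 : m + 1 ≤ k := hmk
      refine le_trans ?_ (neg_le_abs _)
      nlinarith [mul_le_mul_of_nonneg_right hm1 hA.le]
  · intro h m hm
    rw [habs2] at h ⊢
    rw [habs1] at h
    rcases le_or_gt k m with hmk | hmk
    · refine le_trans ?_ (le_abs_self _)
      nlinarith [mul_le_mul_of_nonneg_right hmk hA.le]
    · have hm1 : m + 1 ≤ k := hmk
      refine le_trans ?_ (neg_le_abs _)
      nlinarith [mul_le_mul_of_nonneg_right hm1 hA.le]
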